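/- arXiv:2301.02306 — 3 statements merged into one kernel-verified Lean document; each statement's English description precedes it below -/
import Mathlib

section
/- Let S be any real-valued random variable, c any real constant, Δ > 0, and W ~ Unif([0, KΔ]) for a positive integer K, with W independent of S. Then W₀ := (cS + W) mod Δ is uniformly distributed on [0, Δ] and is independent of S. -/
open MeasureTheory ProbabilityTheory

/-- Real modulo operation: `rmod x a ∈ [0,a)` for `a > 0`. -/
noncomputable def rmod (x a : ℝ) : ℝ := x - a * ⌊x / a⌋

open scoped ENNReal
open Set

lemma rmod_eq_fract {Δ : ℝ} (hΔ : 0 < Δ) (x : ℝ) : rmod x Δ = Δ * Int.fract (x / Δ) := by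
  unfold rmod Int.fract
  have hx : Δ ≠ 0 := ne_of_gt (by linarith)
  field_simp

lemma rmod_mem_Ico {Δ : ℝ} (hΔ : 0 < Δ) (x : ℝ) : rmod x Δ ∈ Ico 0 Δ := by
  rw [rmod_eq_fract hΔ]
  constructor
  · exact mul_nonneg hΔ.le (Int.fract_nonneg _)
  · calc Δ * Int.fract (x / Δ) < Δ * 1 := by
          exact mul_lt_mul_of_pos_left (Int.fract_lt_one _) hΔ
      _ = Δ := mul_one Δ

lemma rmod_add_zsmul {Δ : ℝ} (hΔ : 0 < Δ) (x : ℝ) (n : ℤ) :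
    rmod (x + n • Δ) Δ = rmod x Δ := by
  rw [rmod_eq_fract hΔ, rmod_eq_fract hΔ]
  have : (x + n • Δ) / Δ = x / Δ + n := by
    field_simp
    rw [zsmul_eq_mul]; ring
  rw [this, Int.fract_add_intCast]

lemma rmod_eq_self {Δ : ℝ} (hΔ : 0 < Δ) {x : ℝ} (hx : x ∈ Ico 0 Δ) : rmod x Δ = x := by
  unfold rmod
  have : ⌊x / Δ⌋ = 0 := by
    rw [Int.floor_eq_zero_iff]
    constructor
    · exact div_nonneg hx.1 hΔ.le
    · rw [div_lt_one hΔ]; exact hx.2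
  simp [this]

lemma measurable_rmod (Δ : ℝ) : Measurable fun x : ℝ => rmod x Δ := by
  unfold rmod
  exact measurable_id.sub (measurable_const.mul (measurable_from_top.comp (measurable_id.div_const Δ).floor : Measurable fun x : ℝ => (⌊x / Δ⌋ : ℝ)))

lemma vol_inter_Ioo_of_rmod {Δ : ℝ} (hΔ : 0 < Δ) (A : Set ℝ) :
    {x | rmod x Δ ∈ A} ∩ Ioo 0 Δ = A ∩ Ioo 0 Δ := by
  ext x
  simp only [mem_inter_iff, mem_setOf_eq, and_congr_left_iff]
  intro hx
  rw [rmod_eq_self hΔ (Ioo_subset_Ico_self hx)]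

lemma key_one {Δ : ℝ} (hΔ : 0 < Δ) {A : Set ℝ} (hA : MeasurableSet A) (a : ℝ) :
    volume ({x | rmod x Δ ∈ A} ∩ Ioc a (a + Δ)) = volume (A ∩ Ioc 0 Δ) := by
  set sA : Set ℝ := {x | rmod x Δ ∈ A} with hsA
  have hsAm : MeasurableSet sA := (measurable_rmod Δ) hA
  have hinv : ∀ g : AddSubgroup.zmultiples Δ, (fun x => g +ᵥ x) ⁻¹' sA = sA := by
    rintro ⟨y, hy⟩
    obtain ⟨n, rfl⟩ := hy
    ext x
    simp only [mem_preimage, hsA, mem_setOf_eq]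
    have : (⟨n • Δ, AddSubgroup.zsmul_mem_zmultiples Δ n⟩ : AddSubgroup.zmultiples Δ) +ᵥ x
        = x + n • Δ := by
      show n • Δ + x = x + n • Δ
      ring
    rw [this, rmod_add_zsmul hΔ]
  have h1 := (isAddFundamentalDomain_Ioc hΔ a).measure_set_eq
    (isAddFundamentalDomain_Ioc hΔ 0) hsAm hinv
  rw [zero_add] at h1
  rw [h1]
  calc volume (sA ∩ Ioc 0 Δ) = volume (sA ∩ Ioo 0 Δ) :=
        measure_congr (ae_eq_set_inter (ae_eq_refl _) Ioo_ae_eq_Ioc.symm)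
    _ = volume (A ∩ Ioo 0 Δ) := by rw [vol_inter_Ioo_of_rmod hΔ]
    _ = volume (A ∩ Ioc 0 Δ) :=
        (measure_congr (ae_eq_set_inter (ae_eq_refl _) Ioo_ae_eq_Ioc.symm)).symm

lemma key_K {Δ : ℝ} (hΔ : 0 < Δ) {A : Set ℝ} (hA : MeasurableSet A) (t : ℝ) (n : ℕ) :
    volume ({x | rmod x Δ ∈ A} ∩ Ioc t (t + n * Δ)) = n * volume (A ∩ Ioc 0 Δ) := by
  induction n with
  | zero => simp
  | succ n ih =>
    have h1 : t ≤ t + n * Δ := by nlinarith [hΔ.le]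
    have h2 : t + n * Δ ≤ t + (n + 1 : ℕ) * Δ := by push_cast; nlinarith
    have hsplit : Ioc t (t + (n + 1 : ℕ) * Δ) = Ioc t (t + n * Δ) ∪ Ioc (t + n * Δ) (t + (n+1:ℕ) * Δ) :=
      (Ioc_union_Ioc_eq_Ioc h1 h2).symm
    have hdisj : Disjoint ({x | rmod x Δ ∈ A} ∩ Ioc t (t + n * Δ))
        ({x | rmod x Δ ∈ A} ∩ Ioc (t + n * Δ) (t + (n+1:ℕ) * Δ)) := by
      apply Disjoint.inter_left' ; apply Disjoint.inter_right'
      exact Ioc_disjoint_Ioc_of_le le_rfl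
    have hsAm : MeasurableSet {x | rmod x Δ ∈ A} := (measurable_rmod Δ) hA
    rw [hsplit, inter_union_distrib_left,
      measure_union hdisj (hsAm.inter measurableSet_Ioc), ih]
    have : t + (n + 1 : ℕ) * Δ = (t + n * Δ) + Δ := by push_cast; ring
    rw [this, key_one hΔ hA]
    push_cast
    ring

lemma key_nu {Δ : ℝ} (hΔ : 0 < Δ) {K : ℕ} (hK : 0 < K) {A : Set ℝ} (hA : MeasurableSet A)
    (t : ℝ) :
    (volume[|Icc 0 ((K:ℝ) * Δ)]) {w | rmod (t + w) Δ ∈ A}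
      = (ENNReal.ofReal Δ)⁻¹ * volume (A ∩ Ioc 0 Δ) := by
  have hKΔ : 0 < (K:ℝ) * Δ := by positivity
  rw [cond_apply measurableSet_Icc]
  have h1 : volume (Icc 0 ((K:ℝ) * Δ) ∩ {w | rmod (t + w) Δ ∈ A})
      = volume (Ioc 0 ((K:ℝ) * Δ) ∩ {w | rmod (t + w) Δ ∈ A}) :=
    (measure_congr (ae_eq_set_inter Ioc_ae_eq_Icc (ae_eq_refl _))).symm
  have h2 : Ioc 0 ((K:ℝ) * Δ) ∩ {w | rmod (t + w) Δ ∈ A}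
      = (fun w => t + w) ⁻¹' ({x | rmod x Δ ∈ A} ∩ Ioc t (t + (K:ℝ) * Δ)) := by
    ext w
    simp only [mem_inter_iff, mem_Ioc, mem_preimage, mem_setOf_eq]
    constructor
    · rintro ⟨⟨hw1, hw2⟩, hw3⟩
      exact ⟨hw3, by linarith, by linarith⟩
    · rintro ⟨hw3, hw1, hw2⟩
      exact ⟨⟨by linarith, by linarith⟩, hw3⟩
  rw [h1, h2, measure_preimage_add, key_K hΔ hA, Real.volume_Icc]
  have hΔ' : ENNReal.ofReal Δ ≠ 0 := by
    simp [ENNReal.ofReal_eq_zero, not_le, hΔ]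
  have hKne : (K : ℝ≥0∞) ≠ 0 := by exact_mod_cast Nat.cast_ne_zero.mpr hK.ne'
  have hKtop : (K : ℝ≥0∞) ≠ ⊤ := ENNReal.natCast_ne_top K
  have h3 : ENNReal.ofReal ((K:ℝ) * Δ - 0) = (K : ℝ≥0∞) * ENNReal.ofReal Δ := by
    rw [sub_zero, ENNReal.ofReal_mul (by positivity), ENNReal.ofReal_natCast]
  rw [h3, ENNReal.mul_inv (Or.inl hKne) (Or.inl hKtop)]
  rw [show ((K : ℝ≥0∞))⁻¹ * (ENNReal.ofReal Δ)⁻¹ * ((K : ℝ≥0∞) * volume (A ∩ Ioc 0 Δ))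
      = ((K : ℝ≥0∞)⁻¹ * (K : ℝ≥0∞)) * ((ENNReal.ofReal Δ)⁻¹ * volume (A ∩ Ioc 0 Δ)) by ring]
  rw [ENNReal.inv_mul_cancel hKne hKtop, one_mul]

/-- Crypto Lemma instance: dithering with a uniform over a period `KΔ` and reducing
modulo `Δ` yields a uniform on `[0,Δ]` independent of `S`. -/
theorem crypto_lemma_mod
    {Ω : Type*} [MeasurableSpace Ω] (P : Measure Ω) [IsProbabilityMeasure P]
    (Δ : ℝ) (hΔ : 0 < Δ) (K : ℕ) (hK : 0 < K) (c : ℝ)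
    (S W : Ω → ℝ) (hS : Measurable S) (hW : Measurable W)
    (hWdist : pdf.IsUniform W (Set.Icc 0 ((K:ℝ) * Δ)) P)
    (hindep : IndepFun S W P) :
    pdf.IsUniform (fun ω => rmod (c * S ω + W ω) Δ) (Set.Icc 0 Δ) P ∧
    IndepFun (fun ω => rmod (c * S ω + W ω) Δ) S P := by
  have hW₀m : Measurable fun ω => rmod (c * S ω + W ω) Δ :=
    (measurable_rmod Δ).comp ((hS.const_mul c).add hW)
  have hν : Measure.map W P = volume[|Icc 0 ((K:ℝ) * Δ)] := hWdist
  have hmap : Measure.map (fun ω => (S ω, W ω)) P = (P.map S).prod (P.map W) :=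
    (indepFun_iff_map_prod_eq_prod_map_map hS.aemeasurable hW.aemeasurable).mp hindep
  have hSprob : IsProbabilityMeasure (P.map S) := Measure.isProbabilityMeasure_map hS.aemeasurable
  have key : ∀ A B : Set ℝ, MeasurableSet A → MeasurableSet B →
      P ((fun ω => rmod (c * S ω + W ω) Δ) ⁻¹' A ∩ S ⁻¹' B)
        = ((ENNReal.ofReal Δ)⁻¹ * volume (A ∩ Ioc 0 Δ)) * P.map S B := by
    intro A B hA hB
    set C : Set (ℝ × ℝ) := {p : ℝ × ℝ | rmod (c * p.1 + p.2) Δ ∈ A} ∩ B ×ˢ univ with hC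
    have hgm : Measurable fun p : ℝ × ℝ => rmod (c * p.1 + p.2) Δ :=
      (measurable_rmod Δ).comp ((measurable_fst.const_mul c).add measurable_snd)
    have hCm : MeasurableSet C := (hgm hA).inter (hB.prod MeasurableSet.univ)
    have hpre : (fun ω => rmod (c * S ω + W ω) Δ) ⁻¹' A ∩ S ⁻¹' B
        = (fun ω => (S ω, W ω)) ⁻¹' C := by
      ext ω
      simp only [hC, mem_inter_iff, mem_preimage, mem_setOf_eq, mem_prod, mem_univ, and_true]
    rw [hpre, ← Measure.map_apply (hS.prodMk hW) hCm, hmap, Measure.prod_apply hCm]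
    have hsec : ∀ s : ℝ, (P.map W) (Prod.mk s ⁻¹' C)
        = B.indicator (fun _ => (ENNReal.ofReal Δ)⁻¹ * volume (A ∩ Ioc 0 Δ)) s := by
      intro s
      by_cases hs : s ∈ B
      · have hpc : Prod.mk s ⁻¹' C = {w | rmod (c * s + w) Δ ∈ A} := by
          ext w; simp [hC, hs]
        rw [hpc, hν, key_nu hΔ hK hA (c * s), indicator_of_mem hs]
      · have hpc : Prod.mk s ⁻¹' C = ∅ := by
          ext w; simp [hC, hs]
        rw [hpc, indicator_of_notMem hs]
        simp
    rw [lintegral_congr hsec, lintegral_indicator hB, setLIntegral_const, mul_comm]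
  have hA1 : ∀ A : Set ℝ, MeasurableSet A →
      P ((fun ω => rmod (c * S ω + W ω) Δ) ⁻¹' A)
        = (ENNReal.ofReal Δ)⁻¹ * volume (A ∩ Ioc 0 Δ) := by
    intro A hA
    have h1 := key A univ hA MeasurableSet.univ
    simpa using h1
  constructor
  · show Measure.map (fun ω => rmod (c * S ω + W ω) Δ) P = volume[|Icc 0 Δ]
    ext A hA
    rw [Measure.map_apply hW₀m hA, cond_apply measurableSet_Icc, hA1 A hA,
      Real.volume_Icc, sub_zero]
    congr 1
    rw [inter_comm]
    exact measure_congr (ae_eq_set_inter Ioc_ae_eq_Icc (ae_eq_refl _))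
  · rw [indepFun_iff_measure_inter_preimage_eq_mul]
    intro A B hA hB
    rw [key A B hA hB, hA1 A hA, ← Measure.map_apply hS hB]
end

section
/- With the setup of the previous statement, the function α ↦ ((1-α)²·V_X·V_S + σ²·V_X + α²·σ²·V_S) / (V_X + V_S + σ²) is minimized over α ∈ ℝ at α* = V_X/(V_X + σ²), and the minimum value is V_X·σ²/(V_X + σ²) (independent of V_S, provided V_S ≥ 0). -/
theorem lmmse_min_over_alpha (VX VS σ : ℝ) (hVX : 0 < VX) (hVS : 0 ≤ VS) (hσ : 0 < σ) :
    (∀ α : ℝ,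
      VX * σ^2 / (VX + σ^2)
        ≤ ((1 - α)^2 * VX * VS + σ^2 * VX + α^2 * σ^2 * VS) / (VX + VS + σ^2)) ∧
    ((1 - VX / (VX + σ^2))^2 * VX * VS + σ^2 * VX + (VX / (VX + σ^2))^2 * σ^2 * VS)
        / (VX + VS + σ^2)
      = VX * σ^2 / (VX + σ^2) := by
  have h1 : 0 < VX + σ^2 := by positivity
  have h2 : 0 < VX + VS + σ^2 := by positivity
  constructor
  · intro α
    rw [div_le_div_iff₀ h1 h2]
    nlinarith [mul_nonneg hVS (sq_nonneg (α * (VX + σ^2) - VX)), sq_nonneg σ]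
  · rw [div_eq_div_iff h2.ne' h1.ne']
    field_simp
    ring
end

section
/- Let δ > 0, m ≥ 2 an integer, 𝒯 = {0, δ, ..., (m-1)δ}, 𝒮 ⊆ {jδ : j ∈ ℕ}, and φ(t,s) = ((t + (m-1)s) mod (mδ)) + s. Then for every u in the image of φ, the value of t is uniquely determined by u: that is, if φ(t₁,s₁) = φ(t₂,s₂) for t₁,t₂ ∈ 𝒯 and s₁,s₂ ∈ 𝒮, then t₁ = t₂. -/
/-- The Scheme 2 mapping `φ(t,s) = ((t + (m-1)s) mod (mδ)) + s`. -/
noncomputable def phi (m : ℕ) (δ t s : ℝ) : ℝ := rmod (t + ((m:ℝ) - 1) * s) ((m:ℝ) * δ) + s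

lemma rmod_int_mul (n : ℤ) (m : ℕ) (δ : ℝ) (hδ : 0 < δ) (hm : 0 < m) :
    rmod ((n:ℝ) * δ) ((m:ℝ) * δ) = ((n % (m:ℤ) : ℤ) : ℝ) * δ := by
  have hmδ : ((m:ℝ) * δ) ≠ 0 := by positivity
  have hdiv : ((n:ℝ) * δ) / ((m:ℝ) * δ) = (((n / m : ℚ)) : ℝ) := by
    push_cast
    rw [mul_div_mul_right _ _ (ne_of_gt hδ)]
  have hfl : ⌊((n:ℝ) * δ) / ((m:ℝ) * δ)⌋ = n / (m:ℤ) := by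
    rw [hdiv, Rat.floor_cast, Rat.floor_intCast_div_natCast]
  unfold rmod
  rw [hfl]
  have := Int.emod_add_mul_ediv n m
  have h2 : ((n % (m:ℤ) : ℤ) : ℝ) = (n : ℝ) - (m:ℝ) * ((n / (m:ℤ) : ℤ) : ℝ) := by
    push_cast [Int.emod_def]
    ring
  rw [h2]
  ring

lemma phi_val (m : ℕ) (hm : 0 < m) (δ : ℝ) (hδ : 0 < δ) (i j : ℕ) :
    phi m δ ((i:ℝ) * δ) ((j:ℝ) * δ)
      = ((((i : ℤ) + ((m:ℤ) - 1) * j) % m + j : ℤ) : ℝ) * δ := by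
  unfold phi
  have h1 : (i:ℝ) * δ + ((m:ℝ) - 1) * ((j:ℝ) * δ)
      = (((i : ℤ) + ((m:ℤ) - 1) * j : ℤ) : ℝ) * δ := by push_cast; ring
  rw [h1, rmod_int_mul _ m δ hδ hm]
  push_cast; ring

theorem phi_determines_t (δ : ℝ) (hδ : 0 < δ) (m : ℕ) (hm : 2 ≤ m)
    (t₁ t₂ s₁ s₂ : ℝ)
    (ht₁ : ∃ i : ℕ, i < m ∧ t₁ = (i:ℝ) * δ) (ht₂ : ∃ i : ℕ, i < m ∧ t₂ = (i:ℝ) * δ)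
    (hs₁ : ∃ j : ℕ, s₁ = (j:ℝ) * δ) (hs₂ : ∃ j : ℕ, s₂ = (j:ℝ) * δ)
    (h : phi m δ t₁ s₁ = phi m δ t₂ s₂) :
    t₁ = t₂ := by
  obtain ⟨i₁, hi₁, rfl⟩ := ht₁
  obtain ⟨i₂, hi₂, rfl⟩ := ht₂
  obtain ⟨j₁, rfl⟩ := hs₁
  obtain ⟨j₂, rfl⟩ := hs₂
  have hm0 : 0 < m := by omega
  rw [phi_val m hm0 δ hδ, phi_val m hm0 δ hδ] at h
  have hZ : (((i₁ : ℤ) + ((m:ℤ) - 1) * j₁) % m + j₁ : ℤ)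
      = (((i₂ : ℤ) + ((m:ℤ) - 1) * j₂) % m + j₂ : ℤ) := by
    have := mul_right_cancel₀ (ne_of_gt hδ) h
    exact_mod_cast this
  -- take mod m
  have key : (i₁ : ℤ) % m = (i₂ : ℤ) % m := by
    have h1 : ∀ (i j : ℕ), ((((i : ℤ) + ((m:ℤ) - 1) * j) % m + j) % m) = (i : ℤ) % m := by
      intro i j
      conv_lhs => rw [Int.add_emod, Int.emod_emod_of_dvd _ dvd_rfl]
      rw [← Int.add_emod]
      have : (i : ℤ) + ((m:ℤ) - 1) * j + j = (i : ℤ) + m * j := by ring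
      rw [this, Int.add_mul_emod_self_left]
    calc (i₁ : ℤ) % m = _ % m := (h1 i₁ j₁).symm
      _ = _ % m := by rw [hZ]
      _ = (i₂ : ℤ) % m := h1 i₂ j₂
  have : (i₁ : ℤ) = (i₂ : ℤ) := by
    rwa [Int.emod_eq_of_lt (by positivity) (by exact_mod_cast hi₁),
         Int.emod_eq_of_lt (by positivity) (by exact_mod_cast hi₂)] at key
  have : i₁ = i₂ := by exact_mod_cast this
  rw [this]
end
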